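/- Let H and K be real Hilbert spaces and T : H →L[ℝ] K a bounded linear operator with ‖T‖ ≤ 1. Let β > 0, w₀ ∈ H, and let h₀ = (T*T)^{β/2} w₀, where the fractional power of the nonnegative selfadjoint operator T*T is defined via the continuous functional calculus. For λ > 0 let h* = (T*T + λ·id)⁻¹ (T*T h₀) be the Tikhonov-regularized solution. Then ‖h* − h₀‖² ≤ ‖w₀‖² · λ^{min(β, 2)}. -/

import Mathlib

open ContinuousLinearMap

private lemma aux_bijective_of_coercive {V : Type*} [NormedAddCommGroup V]
    [InnerProductSpace ℝ V] [CompleteSpace V] (S : V →L[ℝ] V) (c : ℝ) (hc : 0 < c)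
    (h : ∀ x, c * (‖x‖ * ‖x‖) ≤ (inner ℝ (S x) x : ℝ)) : Function.Bijective S := by
  have hB : IsCoercive ((innerSL ℝ).comp S) := ⟨c, hc, fun u => by
    simpa [mul_assoc] using h u⟩
  have he : ∀ v, S v = hB.continuousLinearEquivOfBilin v := fun v =>
    hB.unique_continuousLinearEquivOfBilin (fun w => rfl)
  rw [show (S : V → V) = ⇑hB.continuousLinearEquivOfBilin from funext he]
  exact hB.continuousLinearEquivOfBilin.bijective

private lemma aux_inner_cfc_nonneg {H : Type*} [NormedAddCommGroup H]
    [InnerProductSpace ℝ H] [CompleteSpace H]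
    [ContinuousFunctionalCalculus ℝ (H →L[ℝ] H) IsSelfAdjoint]
    (A : H →L[ℝ] H) (h : ℝ → ℝ) (hh : ContinuousOn h (spectrum ℝ A))
    (hh0 : ∀ x ∈ spectrum ℝ A, 0 ≤ h x) (w : H) :
    0 ≤ (inner ℝ (cfc h A w) w : ℝ) := by
  set s : ℝ → ℝ := fun x => Real.sqrt (h x) with hs_def
  have hs : ContinuousOn s (spectrum ℝ A) := Real.continuous_sqrt.comp_continuousOn hh
  have h1 : cfc h A = cfc s A * cfc s A := by
    rw [← cfc_mul s s A hs hs]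
    exact cfc_congr fun x hx => (Real.mul_self_sqrt (hh0 x hx)).symm
  have hD : IsSelfAdjoint (cfc s A) := cfc_predicate s A
  have h2 : (cfc s A * cfc s A) w = cfc s A (cfc s A w) := rfl
  rw [h1, h2]
  have h3 : (inner ℝ (cfc s A (cfc s A w)) w : ℝ) = inner ℝ (cfc s A w) (cfc s A w) := by
    nth_rewrite 1 [← hD.adjoint_eq]
    exact ContinuousLinearMap.adjoint_inner_left _ _ _
  rw [h3]
  exact real_inner_self_nonneg

private lemma aux_norm_cfc_apply_le {H : Type*} [NormedAddCommGroup H]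
    [InnerProductSpace ℝ H] [CompleteSpace H]
    [ContinuousFunctionalCalculus ℝ (H →L[ℝ] H) IsSelfAdjoint]
    (A : H →L[ℝ] H) (hA : IsSelfAdjoint A) (f : ℝ → ℝ)
    (hf : ContinuousOn f (spectrum ℝ A)) {c : ℝ} (hc : 0 ≤ c)
    (hb : ∀ x ∈ spectrum ℝ A, |f x| ≤ c) (w : H) : ‖cfc f A w‖ ≤ c * ‖w‖ := by
  have hB : IsSelfAdjoint (cfc f A) := cfc_predicate f A
  have h1 : ‖cfc f A w‖ ^ 2 = (inner ℝ (cfc (fun x => f x * f x) A w) w : ℝ) := by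
    rw [cfc_mul f f A hf hf]
    have h2 : (cfc f A * cfc f A) w = cfc f A (cfc f A w) := rfl
    rw [h2]
    have h3 : (inner ℝ (cfc f A (cfc f A w)) w : ℝ) = inner ℝ (cfc f A w) (cfc f A w) := by
      nth_rewrite 1 [← hB.adjoint_eq]
      exact ContinuousLinearMap.adjoint_inner_left _ _ _
    rw [h3, real_inner_self_eq_norm_sq]
  have h2 : 0 ≤ (inner ℝ (cfc (fun x => c ^ 2 - f x * f x) A w) w : ℝ) := by
    apply aux_inner_cfc_nonneg A _ (continuousOn_const.sub (hf.mul hf))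
    intro x hx
    have := hb x hx
    show 0 ≤ c ^ 2 - f x * f x
    nlinarith [abs_nonneg (f x), sq_abs (f x)]
  have h3 : cfc (fun x => c ^ 2 - f x * f x) A
      = c ^ 2 • (1 : H →L[ℝ] H) - cfc (fun x => f x * f x) A := by
    rw [cfc_sub (fun _ => c ^ 2) (fun x => f x * f x) A continuousOn_const (hf.mul hf),
      cfc_const _ _ hA, Algebra.algebraMap_eq_smul_one]
  rw [h3] at h2
  have h4 : (inner ℝ ((c ^ 2 • (1 : H →L[ℝ] H) - cfc (fun x => f x * f x) A) w) w : ℝ)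
      = c ^ 2 * (inner ℝ w w : ℝ) - (inner ℝ (cfc (fun x => f x * f x) A w) w : ℝ) := by
    simp [inner_sub_left, real_inner_smul_left]
  rw [h4] at h2
  have h5 : ‖cfc f A w‖ ^ 2 ≤ c ^ 2 * ‖w‖ ^ 2 := by
    rw [h1]
    have := real_inner_self_eq_norm_sq w
    nlinarith
  nlinarith [norm_nonneg (cfc f A w), norm_nonneg w, mul_nonneg hc (norm_nonneg w)]

private lemma aux_scalar {β lam x : ℝ} (hβ : 0 < β) (hlam : 0 < lam) (hx0 : 0 ≤ x)
    (hx1 : x ≤ 1) : lam * x ^ (β / 2) / (x + lam) ≤ lam ^ (min β 2 / 2) := by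
  have hxl : 0 < x + lam := by linarith
  rw [div_le_iff₀ hxl]
  rcases le_total 2 β with h2 | h2
  · rw [min_eq_right h2]
    norm_num
    have hxx : x ^ (β / 2) ≤ x := by
      rcases eq_or_lt_of_le hx0 with h | h
      · rw [← h, Real.zero_rpow (by positivity)]
      · calc x ^ (β / 2) ≤ x ^ (1 : ℝ) :=
              Real.rpow_le_rpow_of_exponent_ge h hx1 (by linarith)
          _ = x := Real.rpow_one x
    nlinarith
  · rw [min_eq_left h2]
    have hgm : x ^ (β / 2) * lam ^ (1 - β / 2) ≤ (β / 2) * x + (1 - β / 2) * lam :=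
      Real.geom_mean_le_arith_mean2_weighted (by positivity) (by linarith)
        hx0 hlam.le (by ring)
    have hmul : lam ^ (β / 2) * lam ^ (1 - β / 2) = lam := by
      rw [← Real.rpow_add hlam]
      norm_num
    have hl1 : 0 ≤ lam ^ (β / 2) := Real.rpow_nonneg hlam.le _
    have hl2 : 0 ≤ lam ^ (1 - β / 2) := Real.rpow_nonneg hlam.le _
    have hx2 : 0 ≤ x ^ (β / 2) := Real.rpow_nonneg hx0 _
    calc lam * x ^ (β / 2) = lam ^ (β / 2) * (x ^ (β / 2) * lam ^ (1 - β / 2)) := by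
          rw [← mul_assoc, mul_comm (lam ^ (β / 2)) (x ^ (β / 2)), mul_assoc, hmul, mul_comm]
      _ ≤ lam ^ (β / 2) * ((β / 2) * x + (1 - β / 2) * lam) :=
          mul_le_mul_of_nonneg_left hgm hl1
      _ ≤ lam ^ (β / 2) * (x + lam) := by
          apply mul_le_mul_of_nonneg_left _ hl1
          nlinarith

/-- Strong-metric Tikhonov regularization bias bound under the β-source condition:
if `‖T‖ ≤ 1`, `h₀ = (T*T)^(β/2) w₀` (fractional power via the continuous functional
calculus) and `h*` is the Tikhonov solution, i.e. `(T*T + λ·id) h* = T*T h₀`, then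
`‖h* − h₀‖² ≤ ‖w₀‖² λ^(min β 2)`. -/
theorem tikhonov_bias_strong_metric
    {H K : Type*} [NormedAddCommGroup H] [InnerProductSpace ℝ H] [CompleteSpace H]
    [NormedAddCommGroup K] [InnerProductSpace ℝ K] [CompleteSpace K]
    [ContinuousFunctionalCalculus ℝ (H →L[ℝ] H) IsSelfAdjoint]
    (T : H →L[ℝ] K) (hT : ‖T‖ ≤ 1)
    (β : ℝ) (hβ : 0 < β) (w₀ h₀ : H)
    (hsource : h₀ = cfc (fun x : ℝ => x ^ (β / 2)) (adjoint T ∘L T) w₀)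
    (lam : ℝ) (hlam : 0 < lam) (hstar : H)
    (hstar_eq : (adjoint T ∘L T + lam • ContinuousLinearMap.id ℝ H) hstar
      = (adjoint T ∘L T) h₀) :
    ‖hstar - h₀‖ ^ 2 ≤ ‖w₀‖ ^ 2 * lam ^ min β 2 := by
  rcases subsingleton_or_nontrivial H with hs | hn
  · have h0 : hstar - h₀ = 0 := Subsingleton.elim _ _
    have hpos : (0 : ℝ) ≤ ‖w₀‖ ^ 2 * lam ^ min β 2 := by positivity
    simpa [h0] using hpos
  set A := adjoint T ∘L T with hAdef
  have hA : IsSelfAdjoint A := by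
    rw [IsSelfAdjoint, ContinuousLinearMap.star_eq_adjoint, hAdef,
      ContinuousLinearMap.adjoint_comp, ContinuousLinearMap.adjoint_adjoint]
  have hAnorm : ‖A‖ ≤ 1 := by
    rw [hAdef, ContinuousLinearMap.norm_adjoint_comp_self]
    nlinarith [norm_nonneg T]
  have hTx : ∀ x : H, (inner ℝ (A x) x : ℝ) = ‖T x‖ ^ 2 := fun x => by
    rw [hAdef, ContinuousLinearMap.comp_apply, ContinuousLinearMap.adjoint_inner_left,
      real_inner_self_eq_norm_sq]
  have hspec : spectrum ℝ A ⊆ Set.Icc 0 1 := by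
    intro μ hμ
    have hnorm : ‖μ‖ ≤ ‖A‖ := spectrum.norm_le_norm_of_mem hμ
    rw [Real.norm_eq_abs] at hnorm
    have habs : |μ| ≤ 1 := le_trans hnorm hAnorm
    rw [abs_le] at habs
    refine ⟨?_, habs.2⟩
    by_contra hneg
    push_neg at hneg
    have hbij : Function.Bijective (A - μ • (1 : H →L[ℝ] H)) := by
      apply aux_bijective_of_coercive _ (-μ) (by linarith)
      intro x
      have h1 := hTx x
      have h2 : (inner ℝ ((A - μ • (1 : H →L[ℝ] H)) x) x : ℝ)
          = (inner ℝ (A x) x : ℝ) - μ * (inner ℝ x x : ℝ) := by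
        simp [inner_sub_left, real_inner_smul_left]
      rw [h2, h1, real_inner_self_eq_norm_sq]
      nlinarith [sq_nonneg ‖T x‖, sq_nonneg ‖x‖]
    have hunit : IsUnit (algebraMap ℝ (H →L[ℝ] H) μ - A) := by
      rw [Algebra.algebraMap_eq_smul_one, ← neg_sub A (μ • (1 : H →L[ℝ] H))]
      exact (ContinuousLinearMap.isUnit_iff_bijective.mpr hbij).neg
    exact spectrum.mem_iff.mp hμ hunit
  set f : ℝ → ℝ := fun x => x ^ (β / 2) with hf_def
  have hfc : Continuous f := by
    rw [continuous_iff_continuousAt]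
    exact fun x => Real.continuousAt_rpow_const x _ (Or.inr (by positivity))
  set g : ℝ → ℝ := fun x => f x * x / (x + lam) with hg_def
  have hgc : ContinuousOn g (spectrum ℝ A) := by
    apply ContinuousOn.div ((hfc.continuousOn).mul continuousOn_id)
      ((continuous_id.add continuous_const).continuousOn)
    intro x hx
    have := (hspec hx).1
    show x + lam ≠ 0
    exact ne_of_gt (by linarith)
  have hinj : Function.Injective (A + lam • ContinuousLinearMap.id ℝ H) := by
    apply Function.Bijective.injective
    apply aux_bijective_of_coercive _ lam hlam
    intro x
    have h1 := hTx x
    have h2 : (inner ℝ ((A + lam • ContinuousLinearMap.id ℝ H) x) x : ℝ)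
        = (inner ℝ (A x) x : ℝ) + lam * (inner ℝ x x : ℝ) := by
      simp [inner_add_left, real_inner_smul_left]
    rw [h2, h1, real_inner_self_eq_norm_sq]
    nlinarith [sq_nonneg ‖T x‖]
  have hone : A + lam • ContinuousLinearMap.id ℝ H = cfc (fun x : ℝ => x + lam) A := by
    have h := cfc_add_const lam (id : ℝ → ℝ) A continuousOn_id hA
    rw [show (fun x : ℝ => x + lam) = (fun x : ℝ => id x + lam) from rfl, h,
      cfc_id ℝ A hA, Algebra.algebraMap_eq_smul_one]
    congr 1
  have hop : (A + lam • ContinuousLinearMap.id ℝ H) * cfc g A = A * cfc f A := by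
    rw [hone]
    calc cfc (fun x : ℝ => x + lam) A * cfc g A
        = cfc (fun x : ℝ => (x + lam) * g x) A :=
          (cfc_mul _ _ A ((continuous_id.add continuous_const).continuousOn) hgc).symm
      _ = cfc (fun x : ℝ => x * f x) A := by
          apply cfc_congr
          intro x hx
          have hx0 := (hspec hx).1
          have hne : x + lam ≠ 0 := by positivity
          show (x + lam) * (f x * x / (x + lam)) = x * f x
          field_simp
      _ = cfc (fun x : ℝ => x) A * cfc f A :=
          cfc_mul _ _ A continuousOn_id hfc.continuousOn
      _ = A * cfc f A := by rw [cfc_id' ℝ A hA]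
  have hkey : hstar = cfc g A w₀ := by
    apply hinj
    rw [hstar_eq]
    have h1 := congrArg (fun S : H →L[ℝ] H => S w₀) hop
    simp only [ContinuousLinearMap.mul_apply] at h1
    rw [hsource]
    exact h1.symm
  have hdiff : hstar - h₀ = cfc (fun x => g x - f x) A w₀ := by
    rw [cfc_sub g f A hgc hfc.continuousOn, ContinuousLinearMap.sub_apply, hkey, hsource]
  set c := lam ^ (min β 2 / 2) with hc_def
  have hc : 0 ≤ c := Real.rpow_nonneg hlam.le _
  have hbound : ∀ x ∈ spectrum ℝ A, |g x - f x| ≤ c := by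
    intro x hx
    obtain ⟨hx0, hx1⟩ := hspec hx
    have hne : (0 : ℝ) < x + lam := by linarith
    have hfx0 : 0 ≤ f x := Real.rpow_nonneg hx0 _
    have hgf : g x - f x = -(lam * f x / (x + lam)) := by
      show f x * x / (x + lam) - f x = -(lam * f x / (x + lam))
      field_simp
      ring
    rw [hgf, abs_neg, abs_of_nonneg (by positivity)]
    exact aux_scalar hβ hlam hx0 hx1
  have hmain : ‖hstar - h₀‖ ≤ c * ‖w₀‖ := by
    rw [hdiff]
    exact aux_norm_cfc_apply_le A hA _ (hgc.sub hfc.continuousOn) hc hbound w₀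
  have hcc : c * c = lam ^ min β 2 := by
    rw [hc_def, ← Real.rpow_add hlam, add_halves]
  calc ‖hstar - h₀‖ ^ 2 ≤ (c * ‖w₀‖) ^ 2 :=
        pow_le_pow_left₀ (norm_nonneg _) hmain 2
    _ = (c * c) * ‖w₀‖ ^ 2 := by ring
    _ = ‖w₀‖ ^ 2 * lam ^ min β 2 := by rw [hcc]; ring
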